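/- Let F be an infinite field and W an F-subspace of Mₙ(F). If the scalar extension W ⊗_F K ⊆ Mₙ(K), for K an extension field of F, contains an invertible matrix, then W contains an invertible matrix. -/

import Mathlib

private lemma stmt6_key {F : Type*} [Field F] {n k : ℕ} (A : Fin k → Matrix (Fin n) (Fin n) F)
    (R : Type*) [CommRing R] [Algebra F R] (x : Fin k → R) :
    MvPolynomial.aeval x (Matrix.det fun i j => ∑ t, MvPolynomial.X t * MvPolynomial.C (A t i j)) =
      (Matrix.of fun i j => ∑ t, x t * algebraMap F R (A t i j)).det := by
  refine (AlgHom.map_det _ _).trans ?_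
  congr 1
  ext i j
  change MvPolynomial.aeval x (∑ t, MvPolynomial.X t * MvPolynomial.C (A t i j)) = _
  simp [Matrix.map_apply]

/-- If `F` is infinite and a subspace `W ⊆ Mₙ(F)` is such that its scalar extension
`W ⊗_F K ⊆ Mₙ(K)` contains an invertible matrix, then `W` contains an invertible
matrix. -/
theorem stmt6 {F K : Type*} [Field F] [Infinite F] [Field K] [Algebra F K] {n : ℕ}
    (W : Submodule F (Matrix (Fin n) (Fin n) F))
    (h : ∃ m ∈ Submodule.span K
        ((fun a : Matrix (Fin n) (Fin n) F => a.map (algebraMap F K)) '' (W : Set _)),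
      IsUnit m) :
    ∃ a ∈ W, IsUnit a := by
  obtain ⟨m, hm, hmu⟩ := h
  rw [Submodule.mem_span_set'] at hm
  obtain ⟨k, c, v, rfl⟩ := hm
  choose A hAW hAv using fun i => (v i).2
  -- the matrix of polynomials
  set M : Matrix (Fin n) (Fin n) (MvPolynomial (Fin k) F) :=
    fun i j => ∑ t, MvPolynomial.X t * MvPolynomial.C (A t i j) with hM
  -- det of m is nonzero
  have hdet : (∑ i, c i • (v i : Matrix (Fin n) (Fin n) K)).det ≠ 0 := by
    intro h0
    exact ((Matrix.isUnit_iff_isUnit_det _).1 hmu).ne_zero (by rw [h0])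
  have hmeq : (∑ i, c i • (v i : Matrix (Fin n) (Fin n) K)) =
      Matrix.of fun i j => ∑ t, c t * algebraMap F K (A t i j) := by
    ext i j
    simp only [Matrix.sum_apply, Matrix.smul_apply, Matrix.of_apply, smul_eq_mul]
    refine Finset.sum_congr rfl fun t _ => ?_
    rw [← hAv t]
    rfl
  have hPne : M.det ≠ 0 := by
    intro h0
    apply hdet
    rw [hmeq, ← stmt6_key A K c, ← hM, h0, map_zero]
  obtain ⟨x, hx⟩ : ∃ x : Fin k → F, MvPolynomial.eval x M.det ≠ 0 := by
    by_contra hc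
    push_neg at hc
    exact hPne (MvPolynomial.funext fun x => by rw [hc x, map_zero])
  refine ⟨∑ t, x t • A t, Submodule.sum_mem _ fun t _ => Submodule.smul_mem _ _ (hAW t), ?_⟩
  rw [Matrix.isUnit_iff_isUnit_det]
  have : (∑ t, x t • A t).det = MvPolynomial.eval x M.det := by
    have h2 : MvPolynomial.eval x M.det = MvPolynomial.aeval x M.det :=
      (congrFun (congrArg _ (MvPolynomial.coe_aeval_eq_eval x)) M.det).symm
    rw [h2]
    have := stmt6_key A F x
    rw [← hM] at this
    rw [this]
    congr 1
    ext i j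
    simp [Matrix.sum_apply]
  rw [this]
  exact hx.isUnit
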